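/- With the extremal setup below, assume further that v₁v_n is the unique negative edge of Γ′ and that x_n ≤ x₁. Then, for all sufficiently large n, every vertex in N(v₁) \ (N(v_n) ∪ {v_n}) is adjacent in Γ′ to every vertex in N(v₁) ∩ N(v_n). -/

import Mathlib

open Matrix

/-- A signed graph of order `n`: a real symmetric `n × n` matrix with zero diagonal
whose off-diagonal entries lie in `{-1, 0, 1}`. -/
def IsSignedGraph {n : ℕ} (A : Matrix (Fin n) (Fin n) ℝ) : Prop :=
  A.IsSymm ∧ (∀ i, A i i = 0) ∧ ∀ i j, A i j = -1 ∨ A i j = 0 ∨ A i j = 1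

/-- The index (largest eigenvalue) of a signed graph. -/
noncomputable def lambdaMax {n : ℕ} (A : Matrix (Fin n) (Fin n) ℝ) : ℝ :=
  sSup (spectrum ℝ A)

/-- The smallest eigenvalue of a signed graph. -/
noncomputable def lambdaMin {n : ℕ} (A : Matrix (Fin n) (Fin n) ℝ) : ℝ :=
  sInf (spectrum ℝ A)

/-- The spectral radius of a signed graph. -/
noncomputable def rho {n : ℕ} (A : Matrix (Fin n) (Fin n) ℝ) : ℝ :=
  max (lambdaMax A) (-(lambdaMin A))

/-- There is a cycle, all of whose vertices lie in `s`, along whose edges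
the product of the entries of `A` is negative. -/
def HasNegCycleOn {n : ℕ} (A : Matrix (Fin n) (Fin n) ℝ) (s : Set (Fin n)) : Prop :=
  ∃ m : ℕ, 3 ≤ m ∧ ∃ c : ℕ → Fin n,
    (∀ i < m, ∀ j < m, c i = c j → i = j) ∧ (∀ i < m, c i ∈ s) ∧
    (∀ i < m, A (c i) (c ((i + 1) % m)) ≠ 0) ∧
    (∏ i ∈ Finset.range m, A (c i) (c ((i + 1) % m))) < 0

/-- A signed graph is unbalanced if it has a negative cycle. -/
def IsUnbalanced {n : ℕ} (A : Matrix (Fin n) (Fin n) ℝ) : Prop :=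
  HasNegCycleOn A Set.univ

/-- An `m`-element set of pairwise adjacent vertices whose induced signed complete
subgraph is unbalanced. -/
def IsKmMinus {n : ℕ} (A : Matrix (Fin n) (Fin n) ℝ) (m : ℕ) (s : Finset (Fin n)) : Prop :=
  s.card = m ∧ (∀ i ∈ s, ∀ j ∈ s, i ≠ j → A i j ≠ 0) ∧ HasNegCycleOn A ↑s

/-- A `K₄⁻` of a signed graph. -/
def IsK4Minus {n : ℕ} (A : Matrix (Fin n) (Fin n) ℝ) (s : Finset (Fin n)) : Prop :=
  IsKmMinus A 4 s

/-- A signed graph is `t𝒦₄⁻`-free if it contains fewer than `t` distinct `K₄⁻`'s. -/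
def TK4Free {n : ℕ} (t : ℕ) (A : Matrix (Fin n) (Fin n) ℝ) : Prop :=
  {s : Finset (Fin n) | IsK4Minus A s}.ncard < t

/-- Switching isomorphism of signed graphs: `B = (PD) A (PD)ᵀ` for a permutation
matrix `P` and a `±1` diagonal matrix `D`. -/
def SwitchIso {n : ℕ} (A B : Matrix (Fin n) (Fin n) ℝ) : Prop :=
  ∃ (σ : Equiv.Perm (Fin n)) (d : Fin n → ℝ), (∀ i, d i = 1 ∨ d i = -1) ∧
    B = (σ.permMatrix ℝ * Matrix.diagonal d) * A * (σ.permMatrix ℝ * Matrix.diagonal d)ᵀ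

/-- The signed graph `Γ_{s,n}`: the vertices `0, …, n-2` are pairwise adjacent,
the last vertex `n-1` is adjacent exactly to `0, …, s`, and every edge is positive
except the single negative edge joining `n-1` and `0`. -/
noncomputable def GammaSN (s n : ℕ) : Matrix (Fin n) (Fin n) ℝ :=
  fun i j =>
    if i = j then 0
    else if i.val ≠ n - 1 ∧ j.val ≠ n - 1 then 1
    else if min i.val j.val = 0 then -1
    else if min i.val j.val ≤ s then 1
    else 0

/-- The signed graph `Σ_{k,n}` with parameter `r`: vertex `0` is `u₁`, vertex `1` is `u₂`,
vertices `2, …, r+1` are `w₁, …, w_r`, vertices `r+2, …, r+k+1` are `q₁, …, q_k`, and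
vertices `r+k+2, …, n-1` are `v₁, …, v_{n-2-r-k}`.  The only negative edge is `u₁u₂`. -/
noncomputable def SigmaKN (r k n : ℕ) : Matrix (Fin n) (Fin n) ℝ :=
  fun i j =>
    if i = j then 0
    else if min i.val j.val = 0 then (if max i.val j.val = 1 then -1 else 1)
    else if min i.val j.val = 1 then (if max i.val j.val ≤ r + k + 1 then 1 else 0)
    else if max i.val j.val ≤ r + 1 then 1
    else if max i.val j.val ≤ r + k + 1 then 0
    else 1

section Helpers

lemma isHermitian_of_isSymm {n : ℕ} {M : Matrix (Fin n) (Fin n) ℝ} (h : M.IsSymm) :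
    M.IsHermitian := by
  rw [Matrix.IsHermitian, conjTranspose_eq_transpose_of_trivial]; exact h

lemma spectrum_real_eq_range {n : ℕ} {M : Matrix (Fin n) (Fin n) ℝ} (hM : M.IsHermitian) :
    spectrum ℝ M = Set.range hM.eigenvalues := by
  ext a
  constructor
  · intro ha
    rw [spectrum.mem_iff] at ha
    have hdet : (algebraMap ℝ (Matrix (Fin n) (Fin n) ℝ) a - M).det = 0 := by
      by_contra h
      exact ha ((Matrix.isUnit_iff_isUnit_det _).mpr (isUnit_iff_ne_zero.mpr h))
    set V : Matrix (Fin n) (Fin n) ℝ := (hM.eigenvectorUnitary : Matrix (Fin n) (Fin n) ℝ)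
    have h1 : V * star V = 1 := (Matrix.mem_unitaryGroup_iff).mp hM.eigenvectorUnitary.2
    have hkey : algebraMap ℝ (Matrix (Fin n) (Fin n) ℝ) a - M
        = V * diagonal (fun i => a - hM.eigenvalues i) * star V := by
      have hsp := hM.spectral_theorem
      have hof : (RCLike.ofReal ∘ hM.eigenvalues : Fin n → ℝ) = hM.eigenvalues := by
        funext i; simp
      rw [hof, Unitary.conjStarAlgAut_apply] at hsp
      have hd : diagonal (fun i : Fin n => a - hM.eigenvalues i)
          = diagonal (fun _ : Fin n => a) - diagonal hM.eigenvalues := by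
        rw [diagonal_sub]
      rw [hd, Matrix.mul_sub, Matrix.sub_mul, ← hsp]
      congr 1
      have : (diagonal (fun _ : Fin n => a) : Matrix (Fin n) (Fin n) ℝ) = a • 1 := by
        ext i j; by_cases h : i = j <;> simp [h, diagonal, Matrix.one_apply]
      rw [this, Matrix.mul_smul, Matrix.mul_one, Matrix.smul_mul, h1]
      ext i j
      simp [Matrix.algebraMap_matrix_apply, Matrix.one_apply]
    rw [hkey] at hdet
    have hdV : V.det * (star V).det = 1 := by
      rw [← det_mul, h1, det_one]
    rw [det_mul, det_mul, mul_comm, ← mul_assoc, mul_comm (star V).det, hdV, one_mul,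
      det_diagonal] at hdet
    obtain ⟨i, _, hi⟩ := Finset.prod_eq_zero_iff.mp hdet
    exact ⟨i, by linarith [sub_eq_zero.mp hi]⟩
  · rintro ⟨i, rfl⟩
    exact hM.eigenvalues_mem_spectrum_real i

lemma eigenvalue_le_lambdaMax {n : ℕ} {M : Matrix (Fin n) (Fin n) ℝ} (hM : M.IsHermitian)
    (i : Fin n) : hM.eigenvalues i ≤ lambdaMax M := by
  rw [lambdaMax, spectrum_real_eq_range hM]
  exact le_csSup ((Set.finite_range _).bddAbove) ⟨i, rfl⟩

lemma rayleigh {n : ℕ} {M : Matrix (Fin n) (Fin n) ℝ} (hM : M.IsHermitian)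
    (y : Fin n → ℝ) (hy : y ⬝ᵥ y = 1) :
    y ⬝ᵥ (M *ᵥ y) ≤ lambdaMax M ∧
      (y ⬝ᵥ (M *ᵥ y) = lambdaMax M → M *ᵥ y = lambdaMax M • y) := by
  classical
  set V : Matrix (Fin n) (Fin n) ℝ := (hM.eigenvectorUnitary : Matrix (Fin n) (Fin n) ℝ) with hVdef
  have h1 : V * star V = 1 := (Matrix.mem_unitaryGroup_iff).mp hM.eigenvectorUnitary.2
  set μ : Fin n → ℝ := hM.eigenvalues with hμdef
  set z : Fin n → ℝ := star V *ᵥ y with hzdef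
  have hstar : star V = Vᵀ := by
    rw [Matrix.star_eq_conjTranspose, conjTranspose_eq_transpose_of_trivial]
  -- spectral theorem over ℝ
  have hsp : M = V * diagonal μ * star V := by
    have := hM.spectral_theorem
    have hof : (RCLike.ofReal ∘ hM.eigenvalues : Fin n → ℝ) = hM.eigenvalues := by
      funext i; simp
    rwa [hof] at this
  -- y ⬝ (V *ᵥ w) = z ⬝ w
  have hyV : ∀ w : Fin n → ℝ, y ⬝ᵥ (V *ᵥ w) = z ⬝ᵥ w := by
    intro w
    rw [dotProduct_mulVec, hzdef, hstar, ← vecMul_transpose, transpose_transpose]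
  have hVz : V *ᵥ z = y := by
    rw [hzdef, mulVec_mulVec, h1, one_mulVec]
  have hzz : z ⬝ᵥ z = 1 := by
    have h := hyV z
    rw [hVz] at h
    exact h.symm.trans hy
  -- value of quadratic form
  have hMy : M *ᵥ y = V *ᵥ (fun i => μ i * z i) := by
    have hDz : diagonal μ *ᵥ z = fun j => μ j * z j := by
      funext j; rw [mulVec_diagonal]
    rw [hsp, mul_assoc, ← mulVec_mulVec, ← mulVec_mulVec, ← hzdef, hDz]
  have hval : y ⬝ᵥ (M *ᵥ y) = ∑ i, μ i * (z i * z i) := by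
    rw [hMy, hyV]
    simp only [dotProduct]
    exact Finset.sum_congr rfl fun i _ => by ring
  have hle : ∀ i, μ i ≤ lambdaMax M := fun i => eigenvalue_le_lambdaMax hM i
  have hzz' : ∑ i, z i * z i = 1 := hzz
  constructor
  · rw [hval]
    calc ∑ i, μ i * (z i * z i) ≤ ∑ i, lambdaMax M * (z i * z i) :=
          Finset.sum_le_sum fun i _ => mul_le_mul_of_nonneg_right (hle i) (mul_self_nonneg _)
    _ = lambdaMax M := by rw [← Finset.mul_sum, hzz', mul_one]
  · intro heq
    rw [hval] at heq
    have hzero : ∑ i, (lambdaMax M - μ i) * (z i * z i) = 0 := by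
      have : ∑ i, (lambdaMax M - μ i) * (z i * z i)
          = lambdaMax M * ∑ i, z i * z i - ∑ i, μ i * (z i * z i) := by
        rw [Finset.mul_sum, ← Finset.sum_sub_distrib]
        exact Finset.sum_congr rfl fun i _ => by ring
      rw [this, hzz', mul_one, heq, sub_self]
    have hterm : ∀ i ∈ Finset.univ, (lambdaMax M - μ i) * (z i * z i) = 0 := by
      rw [← Finset.sum_eq_zero_iff_of_nonneg]
      · exact hzero
      · intro i _
        exact mul_nonneg (sub_nonneg.mpr (hle i)) (mul_self_nonneg _)
    have hfun : (fun i => μ i * z i) = lambdaMax M • z := by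
      funext i
      have := hterm i (Finset.mem_univ i)
      rcases mul_eq_zero.mp this with h | h
      · have : μ i = lambdaMax M := by linarith [sub_eq_zero.mp h]
        simp [this, Pi.smul_apply, smul_eq_mul]
      · have : z i = 0 := by
          rcases mul_eq_zero.mp h with h' | h' <;> exact h'
        simp [this]
    rw [hMy, hfun, mulVec_smul, hVz]

/-- Add a positive edge between `a` and `b`. -/
def addEdge {n : ℕ} (A : Matrix (Fin n) (Fin n) ℝ) (a b : Fin n) : Matrix (Fin n) (Fin n) ℝ :=
  fun p q => if (p = a ∧ q = b) ∨ (p = b ∧ q = a) then 1 else A p q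

lemma addEdge_eq_of {n : ℕ} {A : Matrix (Fin n) (Fin n) ℝ} {a b p q : Fin n}
    (h : ¬((p = a ∧ q = b) ∨ (p = b ∧ q = a))) : addEdge A a b p q = A p q := if_neg h

lemma addEdge_signed {n : ℕ} {A : Matrix (Fin n) (Fin n) ℝ} {a b : Fin n}
    (hA : IsSignedGraph A) (hab : a ≠ b) : IsSignedGraph (addEdge A a b) := by
  obtain ⟨hs, hd, he⟩ := hA
  refine ⟨?_, ?_, ?_⟩
  · ext p q
    show addEdge A a b q p = addEdge A a b p q
    unfold addEdge
    by_cases h : (p = a ∧ q = b) ∨ (p = b ∧ q = a)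
    · rw [if_pos h, if_pos (by tauto)]
    · rw [if_neg h, if_neg (by tauto)]
      exact congrFun (congrFun hs p) q
  · intro p
    rw [addEdge_eq_of (by rintro (⟨h1, h2⟩ | ⟨h1, h2⟩) <;> exact hab (h1 ▸ h2 ▸ rfl))]
    exact hd p
  · intro p q
    unfold addEdge
    by_cases h : (p = a ∧ q = b) ∨ (p = b ∧ q = a)
    · rw [if_pos h]; tauto
    · rw [if_neg h]; exact he p q

lemma addEdge_negCycle {n : ℕ} {A : Matrix (Fin n) (Fin n) ℝ} {a b : Fin n}
    (hA0 : A a b = 0) (hA0' : A b a = 0) {s : Set (Fin n)}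
    (h : HasNegCycleOn A s) : HasNegCycleOn (addEdge A a b) s := by
  obtain ⟨m, hm, c, hinj, hmem, hnz, hprod⟩ := h
  refine ⟨m, hm, c, hinj, hmem, ?_, ?_⟩
  · intro i hi
    rw [addEdge_eq_of ?_]
    · exact hnz i hi
    · rintro (⟨h1, h2⟩ | ⟨h1, h2⟩) <;>
        exact hnz i hi (by rw [h1, h2]; assumption)
  · have : ∀ i ∈ Finset.range m,
        addEdge A a b (c i) (c ((i + 1) % m)) = A (c i) (c ((i + 1) % m)) := by
      intro i hi
      rw [addEdge_eq_of ?_]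
      rintro (⟨h1, h2⟩ | ⟨h1, h2⟩) <;>
        exact hnz i (Finset.mem_range.mp hi) (by rw [h1, h2]; assumption)
    rw [Finset.prod_congr rfl this]
    exact hprod

lemma addEdge_k4 {n : ℕ} {A : Matrix (Fin n) (Fin n) ℝ} {a b v1 vn : Fin n}
    (hneg : ∀ i j, A i j < 0 → (i = v1 ∧ j = vn) ∨ (i = vn ∧ j = v1))
    (hab : a ≠ b) (hav : a ≠ vn) (hbv : b ≠ vn) (havn : A a vn = 0)
    {s : Finset (Fin n)} (h : IsK4Minus (addEdge A a b) s) : IsK4Minus A s := by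
  obtain ⟨hcard, hadj, hcyc⟩ := h
  by_cases hmem : a ∈ s ∧ b ∈ s
  · -- contradiction: vn ∈ s and a adjacent to vn
    exfalso
    obtain ⟨m, hm, c, hinj, hmems, hnz, hprod⟩ := hcyc
    -- some edge of the cycle is negative
    have : ∃ i ∈ Finset.range m, addEdge A a b (c i) (c ((i + 1) % m)) < 0 := by
      by_contra hcon
      push_neg at hcon
      exact absurd (Finset.prod_nonneg hcon) (not_le.mpr hprod)
    obtain ⟨i, hi, hlt⟩ := this
    have hedge : A (c i) (c ((i + 1) % m)) < 0 := by
      by_cases hc : ((c i) = a ∧ (c ((i + 1) % m)) = b) ∨ ((c i) = b ∧ (c ((i + 1) % m)) = a)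
      · rw [addEdge, if_pos hc] at hlt; norm_num at hlt
      · rwa [addEdge_eq_of hc] at hlt
    have hvn : vn ∈ s := by
      rcases hneg _ _ hedge with ⟨h1, h2⟩ | ⟨h1, h2⟩
      · have := hmems ((i + 1) % m) (Nat.mod_lt _ (by omega)); rwa [h2] at this
      · have := hmems i (Finset.mem_range.mp hi); rwa [h1] at this
    have := hadj a hmem.1 vn hvn hav
    rw [addEdge_eq_of ?_] at this
    · exact this havn
    · rintro (⟨h1, h2⟩ | ⟨h1, h2⟩)
      · exact hbv h2.symm
      · exact hab h1
  · -- the new edge is not inside s; everything transfers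
    have hsame : ∀ p ∈ s, ∀ q ∈ s, addEdge A a b p q = A p q := by
      intro p hp q hq
      apply addEdge_eq_of
      rintro (⟨h1, h2⟩ | ⟨h1, h2⟩) <;> subst h1 <;> subst h2 <;>
        exact hmem ⟨by assumption, by assumption⟩
    refine ⟨hcard, ?_, ?_⟩
    · intro p hp q hq hpq
      have := hadj p hp q hq hpq
      rwa [hsame p hp q hq] at this
    · obtain ⟨m, hm, c, hinj, hmems, hnz, hprod⟩ := hcyc
      refine ⟨m, hm, c, hinj, hmems, ?_, ?_⟩
      · intro i hi
        have := hnz i hi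
        rwa [hsame _ (hmems i hi) _ (hmems _ (Nat.mod_lt _ (by omega)))] at this
      · have heq : ∀ i ∈ Finset.range m,
            addEdge A a b (c i) (c ((i + 1) % m)) = A (c i) (c ((i + 1) % m)) := by
          intro i hi
          exact hsame _ (hmems i (Finset.mem_range.mp hi)) _ (hmems _ (Nat.mod_lt _ (by omega)))
        rw [← Finset.prod_congr rfl heq]
        exact hprod

lemma addEdge_tk4free {n t : ℕ} {A : Matrix (Fin n) (Fin n) ℝ} {a b v1 vn : Fin n}
    (hneg : ∀ i j, A i j < 0 → (i = v1 ∧ j = vn) ∨ (i = vn ∧ j = v1))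
    (hab : a ≠ b) (hav : a ≠ vn) (hbv : b ≠ vn) (havn : A a vn = 0)
    (ht : TK4Free t A) : TK4Free t (addEdge A a b) := by
  have hsub : {s : Finset (Fin n) | IsK4Minus (addEdge A a b) s}
      ⊆ {s : Finset (Fin n) | IsK4Minus A s} :=
    fun s hs => addEdge_k4 hneg hab hav hbv havn hs
  exact lt_of_le_of_lt (Set.ncard_le_ncard hsub (Set.toFinite _)) ht

lemma addEdge_mulVec {n : ℕ} {A : Matrix (Fin n) (Fin n) ℝ} {a b : Fin n}
    (hab : a ≠ b) (h1 : A a b = 0) (h2 : A b a = 0) (x : Fin n → ℝ) :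
    (addEdge A a b) *ᵥ x
      = fun p => A.mulVec x p + (if p = a then x b else if p = b then x a else 0) := by
  funext p
  have key : ∀ q, addEdge A a b p q
      = A p q + ((if p = a ∧ q = b then (1:ℝ) else 0) + (if p = b ∧ q = a then (1:ℝ) else 0)) := by
    intro q
    unfold addEdge
    by_cases c1 : p = a ∧ q = b
    · rw [if_pos (Or.inl c1), if_pos c1, if_neg (fun c2 => hab (c1.1.symm.trans c2.1)),
        c1.1, c1.2, h1]
      ring
    · by_cases c2 : p = b ∧ q = a
      · rw [if_pos (Or.inr c2), if_neg c1, if_pos c2, c2.1, c2.2, h2]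
        ring
      · rw [if_neg (by tauto), if_neg c1, if_neg c2]
        ring
  have expand : (addEdge A a b *ᵥ x) p = ∑ q, addEdge A a b p q * x q := rfl
  have expand2 : A.mulVec x p = ∑ q, A p q * x q := rfl
  rw [expand, expand2]
  simp only [key, add_mul, Finset.sum_add_distrib]
  have s1 : ∑ q, (if p = a ∧ q = b then (1:ℝ) else 0) * x q = if p = a then x b else 0 := by
    by_cases hp : p = a
    · simp [hp, Finset.sum_ite_eq']
    · simp [hp]
  have s2 : ∑ q, (if p = b ∧ q = a then (1:ℝ) else 0) * x q = if p = b then x a else 0 := by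
    by_cases hp : p = b
    · simp [hp, Finset.sum_ite_eq']
    · simp [hp]
  rw [s1, s2]
  by_cases hp : p = a
  · simp [hp, hab, (by rw [hp]; exact hab : p ≠ b)]
  · by_cases hp2 : p = b <;> simp [hp, hp2, Ne.symm hab]

lemma addEdge_quadform {n : ℕ} {A : Matrix (Fin n) (Fin n) ℝ} {a b : Fin n}
    (hab : a ≠ b) (h1 : A a b = 0) (h2 : A b a = 0) (x : Fin n → ℝ) :
    x ⬝ᵥ (addEdge A a b *ᵥ x) = x ⬝ᵥ (A *ᵥ x) + (x a * x b + x b * x a) := by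
  rw [addEdge_mulVec hab h1 h2]
  show (∑ p, x p * (A.mulVec x p + (if p = a then x b else if p = b then x a else 0))) = _
  simp only [mul_add, Finset.sum_add_distrib]
  have hfirst : (∑ p, x p * A.mulVec x p) = x ⬝ᵥ (A *ᵥ x) := rfl
  rw [hfirst]
  congr 1
  have hpt : ∀ p : Fin n, x p * (if p = a then x b else if p = b then x a else 0)
      = (if p = a then x a * x b else 0) + (if p = b then x b * x a else 0) := by
    intro p
    by_cases hp : p = a
    · simp [hp, hab]
    · by_cases hp2 : p = b <;> simp [hp, hp2, Ne.symm hab]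
  rw [Finset.sum_congr rfl (fun p _ => hpt p), Finset.sum_add_distrib,
    Finset.sum_ite_eq' Finset.univ a (fun _ => x a * x b),
    Finset.sum_ite_eq' Finset.univ b (fun _ => x b * x a)]
  simp

end Helpers

theorem extremal_private_joined_to_common (t r : ℕ) (ht : 2 ≤ t)
    (hr : (r : ℝ) = (1 + Real.sqrt (8 * (t : ℝ) - 7)) / 2) :
    ∃ N : ℕ, ∀ n : ℕ, ∀ _hn : N + 4 ≤ n, t ≤ (n - 2).choose 2 →
      ∀ (A : Matrix (Fin n) (Fin n) ℝ) (x : Fin n → ℝ),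
        IsSignedGraph A → IsUnbalanced A → TK4Free t A →
        (∀ B : Matrix (Fin n) (Fin n) ℝ,
          IsSignedGraph B → IsUnbalanced B → TK4Free t B → lambdaMax B ≤ lambdaMax A) →
        (∀ i, 0 ≤ x i) → (∑ i, x i ^ 2) = 1 → A.mulVec x = lambdaMax A • x →
        let v1 : Fin n := ⟨0, by omega⟩
        let v2 : Fin n := ⟨1, by omega⟩
        let vn : Fin n := ⟨n - 1, by omega⟩
        A v1 vn < 0 →
        (∀ i j : Fin n, A i j < 0 → (i = v1 ∧ j = vn) ∨ (i = vn ∧ j = v1)) →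
        x vn ≤ x v1 →
        ∀ i : Fin n, A v1 i ≠ 0 → A vn i = 0 → i ≠ vn →
          ∀ j : Fin n, A v1 j ≠ 0 → A vn j ≠ 0 →
            A i j ≠ 0 := by
  refine ⟨0, ?_⟩
  intro n hn _hchoose A x hsg hub htf hmax hxnn hxnorm heig v1 v2 vn hnegedge hneg hx1n
  intro u hu1 hun huvn w hw1 hwn huw
  -- basic facts
  have hn4 : 4 ≤ n := by omega
  have hsymm := hsg.1
  have hdiag := hsg.2.1
  have hsAp : ∀ p q : Fin n, A q p = A p q := fun p q => congrFun (congrFun hsymm p) q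
  have hv1vn : v1 ≠ vn := by
    intro h
    have := congrArg Fin.val h
    simp only [v1, vn] at this
    omega
  have hu_ne_v1 : u ≠ v1 := by
    intro h; rw [h] at hu1; exact hu1 (hdiag v1)
  have hw_ne_v1 : w ≠ v1 := by
    intro h; rw [h] at hw1; exact hw1 (hdiag v1)
  have hw_ne_vn : w ≠ vn := by
    intro h; rw [h] at hwn; exact hwn (hdiag vn)
  have hu_ne_w : u ≠ w := by
    intro h; rw [h] at hun; exact hwn hun
  have hwu : A w u = 0 := (hsAp u w).symm ▸ huw
  have hunv : A u vn = 0 := (hsAp vn u).symm ▸ hun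
  have hxx : x ⬝ᵥ x = 1 := by
    show (∑ i, x i * x i) = 1
    rw [← hxnorm]
    exact Finset.sum_congr rfl fun i _ => by ring
  have hxAx : x ⬝ᵥ (A *ᵥ x) = lambdaMax A := by
    rw [heig, dotProduct_smul, smul_eq_mul, hxx, mul_one]
  have hH : A.IsHermitian := isHermitian_of_isSymm hsymm
  -- Step C : x u * x w = 0
  have hBsigned := addEdge_signed hsg hu_ne_w
  have hBub : IsUnbalanced (addEdge A u w) := addEdge_negCycle huw hwu hub
  have hBfree : TK4Free t (addEdge A u w) := addEdge_tk4free hneg hu_ne_w huvn hw_ne_vn hunv htf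
  have hBle : lambdaMax (addEdge A u w) ≤ lambdaMax A := hmax _ hBsigned hBub hBfree
  have hBH : (addEdge A u w).IsHermitian := isHermitian_of_isSymm hBsigned.1
  have hBray := (rayleigh hBH x hxx).1
  have hBquad := addEdge_quadform hu_ne_w huw hwu x
  have hxuw : x u * x w = 0 := by
    have h1 : x ⬝ᵥ (A *ᵥ x) + (x u * x w + x w * x u) ≤ lambdaMax A := by
      rw [← hBquad]; exact le_trans hBray hBle
    rw [hxAx] at h1
    have h2 : x u * x w ≤ 0 := by nlinarith
    exact le_antisymm h2 (mul_nonneg (hxnn u) (hxnn w))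
  -- Step D : x v1 = 0
  have keyzero : ∀ p : Fin n, p ≠ v1 → p ≠ vn → x p = 0 → A v1 p ≠ 0 → x v1 = 0 := by
    intro p hp1 hpn hxp hA1p
    have hrow : ∀ q, 0 ≤ A p q := by
      intro q
      by_contra hlt
      rcases hneg p q (lt_of_not_ge hlt) with ⟨h1, _⟩ | ⟨h1, _⟩
      · exact hp1 h1
      · exact hpn h1
    have hsum : (∑ q, A p q * x q) = 0 := by
      have h := congrFun heig p
      have hl : (A *ᵥ x) p = ∑ q, A p q * x q := rfl
      rw [hl] at h
      rw [h]
      show lambdaMax A * x p = 0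
      rw [hxp, mul_zero]
    have hall := (Finset.sum_eq_zero_iff_of_nonneg
      (fun q _ => mul_nonneg (hrow q) (hxnn q))).mp hsum
    have h1 := hall v1 (Finset.mem_univ v1)
    rcases mul_eq_zero.mp h1 with h | h
    · exact absurd ((hsAp v1 p).symm.trans h) hA1p
    · exact h
  have hxv1 : x v1 = 0 := by
    rcases mul_eq_zero.mp hxuw with h0 | h0
    · exact keyzero u hu_ne_v1 huvn h0 hu1
    · exact keyzero w hw_ne_v1 hw_ne_vn h0 hw1
  have hxvn : x vn = 0 := le_antisymm (hxv1 ▸ hx1n) (hxnn vn)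
  -- Step E : a vertex with positive weight, not joined to v1 nor vn
  have hk : ∃ k : Fin n, x k ≠ 0 := by
    by_contra h
    push_neg at h
    have : (∑ i, x i ^ 2) = 0 := Finset.sum_eq_zero fun i _ => by rw [h i]; ring
    rw [hxnorm] at this
    exact one_ne_zero this
  obtain ⟨k, hkx⟩ := hk
  have hk_ne_v1 : k ≠ v1 := fun h => hkx (h ▸ hxv1)
  have hk_ne_vn : k ≠ vn := fun h => hkx (h ▸ hxvn)
  have rowzero : ∀ (p : Fin n) (z : Fin n), x z = 0 →
      (∀ q, q ≠ z → 0 ≤ A p q) → x p = 0 → A p k = 0 := by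
    intro p z hz hrow hxp
    have hterm : ∀ q, 0 ≤ A p q * x q := by
      intro q
      by_cases hq : q = z
      · rw [hq, hz, mul_zero]
      · exact mul_nonneg (hrow q hq) (hxnn q)
    have hsum : (∑ q, A p q * x q) = 0 := by
      have h := congrFun heig p
      have hl : (A *ᵥ x) p = ∑ q, A p q * x q := rfl
      rw [hl] at h
      rw [h]
      show lambdaMax A * x p = 0
      rw [hxp, mul_zero]
    have hall := (Finset.sum_eq_zero_iff_of_nonneg (fun q _ => hterm q)).mp hsum
    have h1 := hall k (Finset.mem_univ k)
    rcases mul_eq_zero.mp h1 with h | h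
    · exact h
    · exact absurd h hkx
  have hAv1k : A v1 k = 0 := by
    apply rowzero v1 vn hxvn ?_ hxv1
    intro q hq
    by_contra hlt
    rcases hneg v1 q (lt_of_not_ge hlt) with ⟨_, h2⟩ | ⟨h1, _⟩
    · exact hq h2
    · exact hv1vn h1
  have hAvnk : A vn k = 0 := by
    apply rowzero vn v1 hxv1 ?_ hxvn
    intro q hq
    by_contra hlt
    rcases hneg vn q (lt_of_not_ge hlt) with ⟨h1, _⟩ | ⟨_, h2⟩
    · exact hv1vn h1.symm
    · exact hq h2
  have hAkv1 : A k v1 = 0 := (hsAp v1 k).symm ▸ hAv1k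
  have hAkvn : A k vn = 0 := (hsAp vn k).symm ▸ hAvnk
  -- Step F : add the edge between k and v1
  have hCsigned := addEdge_signed hsg hk_ne_v1
  have hCub : IsUnbalanced (addEdge A k v1) := addEdge_negCycle hAkv1 hAv1k hub
  have hCfree : TK4Free t (addEdge A k v1) :=
    addEdge_tk4free hneg hk_ne_v1 hk_ne_vn hv1vn hAkvn htf
  have hCle : lambdaMax (addEdge A k v1) ≤ lambdaMax A := hmax _ hCsigned hCub hCfree
  have hCH : (addEdge A k v1).IsHermitian := isHermitian_of_isSymm hCsigned.1
  have hCray := rayleigh hCH x hxx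
  have hCquad : x ⬝ᵥ (addEdge A k v1 *ᵥ x) = lambdaMax A := by
    rw [addEdge_quadform hk_ne_v1 hAkv1 hAv1k x, hxAx, hxv1]
    ring
  have hClam : lambdaMax (addEdge A k v1) = lambdaMax A :=
    le_antisymm hCle (by rw [← hCquad]; exact hCray.1)
  have heigC : (addEdge A k v1) *ᵥ x = lambdaMax (addEdge A k v1) • x :=
    hCray.2 (hCquad.trans hClam.symm)
  have hcontra := congrFun heigC v1
  rw [congrFun (addEdge_mulVec hk_ne_v1 hAkv1 hAv1k x) v1] at hcontra
  rw [if_neg (Ne.symm hk_ne_v1), if_pos rfl] at hcontra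
  have hAxv1 : A.mulVec x v1 = 0 := by
    have h := congrFun heig v1
    rw [h]
    show lambdaMax A * x v1 = 0
    rw [hxv1, mul_zero]
  rw [hAxv1, zero_add] at hcontra
  have : (lambdaMax (addEdge A k v1) • x) v1 = 0 := by
    show lambdaMax (addEdge A k v1) * x v1 = 0
    rw [hxv1, mul_zero]
  rw [this] at hcontra
  exact hkx hcontra
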